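/- arXiv:2101.06195 — 2 statements merged into one kernel-verified Lean document; each statement's English description precedes it below -/
import Mathlib

section
/- Let fA (x₁, x₂) = (−x₁ + x₂³, −x₁ − x₂) and fB (x₁, x₂) = (−x₁, −x₂) be vector fields on ℝ × ℝ, and for k > 0 let S k = {(x₁, x₂) : x₁²/2 + x₂⁴/4 < k}. Then for every k > 0 the sublevel set S k is invariant under arbitrary switching between fA and fB: for every ω ∈ S k and every ν reachable from ω in the reflexive-transitive closure of the union of the fA-flow relation and the fB-flow relation, ν ∈ S k. -/
/-- The vector field `fA (x₁, x₂) = (−x₁ + x₂³, −x₁ − x₂)`. -/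
def fA (x : ℝ × ℝ) : ℝ × ℝ := (-x.1 + x.2 ^ 3, -x.1 - x.2)

/-- The vector field `fB (x₁, x₂) = (−x₁, −x₂)`. -/
def fB (x : ℝ × ℝ) : ℝ × ℝ := (-x.1, -x.2)

/-- The flow relation for a vector field `g` on `ℝ × ℝ`. -/
def FlowRel (g : ℝ × ℝ → ℝ × ℝ) (ω ν : ℝ × ℝ) : Prop :=
  ∃ t : ℝ, 0 ≤ t ∧ ∃ φ : ℝ → ℝ × ℝ, φ 0 = ω ∧ φ t = ν ∧
    ∀ s ∈ Set.Icc (0 : ℝ) t, HasDerivWithinAt φ (g (φ s)) (Set.Icc (0 : ℝ) t) s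

/-- The sublevel set `S k = {(x₁, x₂) : x₁²/2 + x₂⁴/4 < k}`. -/
def S (k : ℝ) : Set (ℝ × ℝ) := {x : ℝ × ℝ | x.1 ^ 2 / 2 + x.2 ^ 4 / 4 < k}

lemma flow_V_nonincr (g : ℝ × ℝ → ℝ × ℝ)
    (hg : ∀ x : ℝ × ℝ, x.1 * (g x).1 + x.2 ^ 3 * (g x).2 ≤ 0) {ω ν : ℝ × ℝ}
    (h : FlowRel g ω ν) : ν.1 ^ 2 / 2 + ν.2 ^ 4 / 4 ≤ ω.1 ^ 2 / 2 + ω.2 ^ 4 / 4 := by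
  obtain ⟨t, ht, φ, hφ0, hφt, hderiv⟩ := h
  rcases eq_or_lt_of_le ht with rfl | ht
  · rw [← hφ0, ← hφt]
  set V : ℝ × ℝ → ℝ := fun p => p.1 ^ 2 / 2 + p.2 ^ 4 / 4 with hV
  have key : ∀ s ∈ Set.Icc (0 : ℝ) t, HasDerivWithinAt (fun s => V (φ s))
      ((φ s).1 * (g (φ s)).1 + (φ s).2 ^ 3 * (g (φ s)).2) (Set.Icc 0 t) s := by
    intro s hs
    have p := hderiv s hs
    have p1 : HasDerivWithinAt (fun s => (φ s).1) ((g (φ s)).1) (Set.Icc 0 t) s :=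
      (ContinuousLinearMap.fst ℝ ℝ ℝ).hasFDerivAt.comp_hasDerivWithinAt s p
    have p2 : HasDerivWithinAt (fun s => (φ s).2) ((g (φ s)).2) (Set.Icc 0 t) s :=
      (ContinuousLinearMap.snd ℝ ℝ ℝ).hasFDerivAt.comp_hasDerivWithinAt s p
    have h1 := ((p1.pow 2).div_const 2)
    have h2 := ((p2.pow 4).div_const 4)
    have := h1.add h2
    refine this.congr_deriv ?_
    norm_num [Nat.cast_ofNat]
    ring
  have hcont : ContinuousOn (fun s => V (φ s)) (Set.Icc 0 t) :=
    fun s hs => (key s hs).continuousWithinAt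
  have hanti : AntitoneOn (fun s => V (φ s)) (Set.Icc 0 t) := by
    apply antitoneOn_of_deriv_nonpos (convex_Icc 0 t) hcont
    · intro s hs
      rw [interior_Icc] at hs
      exact ((key s (Set.mem_Icc_of_Ioo hs)).hasDerivAt
        (Icc_mem_nhds hs.1 hs.2)).differentiableAt.differentiableWithinAt
    · intro s hs
      rw [interior_Icc] at hs
      have hd := (key s (Set.mem_Icc_of_Ioo hs)).hasDerivAt (Icc_mem_nhds hs.1 hs.2)
      rw [hd.deriv]
      exact hg (φ s)
  have := hanti (Set.left_mem_Icc.2 ht.le) (Set.right_mem_Icc.2 ht.le) ht.le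
  simpa [hφ0, hφt] using this

theorem sublevel_invariant_arbitrary_switching (k : ℝ) (hk : 0 < k) :
    ∀ ω ∈ S k, ∀ ν, Relation.ReflTransGen (fun a b => FlowRel fA a b ∨ FlowRel fB a b) ω ν →
      ν ∈ S k := by
  intro ω hω ν hrel
  induction hrel with
  | refl => exact hω
  | tail _ hstep ih =>
    rename_i b c _
    have hA : ∀ x : ℝ × ℝ, x.1 * (fA x).1 + x.2 ^ 3 * (fA x).2 ≤ 0 := by
      intro x
      simp only [fA]
      nlinarith [sq_nonneg x.1, sq_nonneg (x.2 ^ 2)]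
    have hB : ∀ x : ℝ × ℝ, x.1 * (fB x).1 + x.2 ^ 3 * (fB x).2 ≤ 0 := by
      intro x
      simp only [fB]
      nlinarith [sq_nonneg x.1, sq_nonneg (x.2 ^ 2)]
    have hle : c.1 ^ 2 / 2 + c.2 ^ 4 / 4 ≤ b.1 ^ 2 / 2 + b.2 ^ 4 / 4 := by
      rcases hstep with h | h
      · exact flow_V_nonincr fA hA h
      · exact flow_V_nonincr fB hB h
    simp only [S, Set.mem_setOf_eq] at ih ⊢
    exact lt_of_le_of_lt hle ih
end

section
/- Let fA (x₁, x₂) = (−x₁ + x₂³, −x₁ − x₂) and fB (x₁, x₂) = (−x₁, −x₂) be vector fields on ℝ × ℝ. The origin is stable for the system under arbitrary switching between fA and fB: for every ε > 0 there exists δ > 0 such that for every ω with ‖ω‖ < δ and every ν reachable from ω in the reflexive-transitive closure of the union of the fA-flow relation and the fB-flow relation, ‖ν‖ < ε. -/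
/-- The Euclidean norm on `ℝ × ℝ`. -/
noncomputable def enorm2 (x : ℝ × ℝ) : ℝ := Real.sqrt (x.1 ^ 2 + x.2 ^ 2)

/-- Common Lyapunov function. -/
noncomputable def Vlyap (x : ℝ × ℝ) : ℝ := x.1 ^ 2 + x.2 ^ 4 / 2

lemma flow_V_le {g : ℝ × ℝ → ℝ × ℝ}
    (hg : ∀ x : ℝ × ℝ, 2 * x.1 * (g x).1 + 2 * x.2 ^ 3 * (g x).2 ≤ 0)
    {a b : ℝ × ℝ} (h : FlowRel g a b) : Vlyap b ≤ Vlyap a := by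
  obtain ⟨t, ht, φ, h0, hT, hφ⟩ := h
  set F : ℝ → ℝ := fun s => Vlyap (φ s) with hF
  have key : ∀ s ∈ Set.Icc (0:ℝ) t,
      HasDerivWithinAt F
        (2 * (φ s).1 * (g (φ s)).1 + 2 * (φ s).2 ^ 3 * (g (φ s)).2)
        (Set.Icc (0:ℝ) t) s := by
    intro s hs
    have h1 : HasDerivWithinAt (fun u => (φ u).1) ((g (φ s)).1) (Set.Icc (0:ℝ) t) s :=
      (hφ s hs).fst
    have h2 : HasDerivWithinAt (fun u => (φ u).2) ((g (φ s)).2) (Set.Icc (0:ℝ) t) s :=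
      (hφ s hs).snd
    have h3 := (h1.pow 2).add ((h2.pow 4).div_const 2)
    convert h3 using 1
    · rfl
    · rfl
    · rfl
    push_cast
    ring
  have hanti : AntitoneOn F (Set.Icc (0:ℝ) t) := by
    apply antitoneOn_of_deriv_nonpos (convex_Icc 0 t)
    · intro s hs
      exact (key s hs).continuousWithinAt
    · intro s hs
      rw [interior_Icc] at hs
      have : HasDerivAt F
          (2 * (φ s).1 * (g (φ s)).1 + 2 * (φ s).2 ^ 3 * (g (φ s)).2) s :=
        (key s (Set.mem_Icc_of_Ioo hs)).hasDerivAt (Icc_mem_nhds hs.1 hs.2)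
      exact this.differentiableAt.differentiableWithinAt
    · intro s hs
      rw [interior_Icc] at hs
      have hda : HasDerivAt F
          (2 * (φ s).1 * (g (φ s)).1 + 2 * (φ s).2 ^ 3 * (g (φ s)).2) s :=
        (key s (Set.mem_Icc_of_Ioo hs)).hasDerivAt (Icc_mem_nhds hs.1 hs.2)
      rw [hda.deriv]
      exact hg (φ s)
  have := hanti (Set.left_mem_Icc.2 ht) (Set.right_mem_Icc.2 ht) ht
  simpa [hF, h0, hT] using this

lemma reach_V_le {a b : ℝ × ℝ}
    (h : Relation.ReflTransGen (fun a b => FlowRel fA a b ∨ FlowRel fB a b) a b) :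
    Vlyap b ≤ Vlyap a := by
  induction h with
  | refl => exact le_refl _
  | tail _ hstep ih =>
    refine le_trans ?_ ih
    rcases hstep with h | h
    · exact flow_V_le (fun x => by simp only [fA]; nlinarith [sq_nonneg x.1, sq_nonneg (x.2^2)]) h
    · exact flow_V_le (fun x => by simp only [fB]; nlinarith [sq_nonneg x.1, sq_nonneg (x.2^2)]) h

theorem origin_stable_arbitrary_switching :
    ∀ ε : ℝ, 0 < ε → ∃ δ : ℝ, 0 < δ ∧
      ∀ ω : ℝ × ℝ, enorm2 ω < δ →
        ∀ ν : ℝ × ℝ, Relation.ReflTransGen (fun a b => FlowRel fA a b ∨ FlowRel fB a b) ω ν →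
          enorm2 ν < ε := by
  intro ε hε
  refine ⟨min 1 (ε ^ 2 / 4), lt_min one_pos (by positivity), ?_⟩
  intro ω hω ν hreach
  set δ := min 1 (ε ^ 2 / 4) with hδ
  have hδ1 : δ ≤ 1 := min_le_left _ _
  have hδε : δ ≤ ε ^ 2 / 4 := min_le_right _ _
  have hδ0 : 0 < δ := lt_min one_pos (by positivity)
  have hω2 : ω.1 ^ 2 + ω.2 ^ 2 < δ ^ 2 := by
    have := (Real.sqrt_lt' hδ0).1 hω
    simpa [enorm2] using (Real.sqrt_lt' hδ0).1 hω
  have hVω : Vlyap ω ≤ (3/2) * δ ^ 2 := by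
    have h1 : ω.2 ^ 2 < δ ^ 2 := by nlinarith [sq_nonneg ω.1]
    have h2 : ω.2 ^ 4 ≤ δ ^ 4 := by nlinarith [sq_nonneg ω.2, sq_nonneg δ]
    have h3 : δ ^ 4 ≤ δ ^ 2 := pow_le_pow_of_le_one hδ0.le hδ1 (by norm_num)
    simp only [Vlyap]
    nlinarith [sq_nonneg ω.2]
  have hVν : Vlyap ν ≤ (3/2) * δ ^ 2 := le_trans (reach_V_le hreach) hVω
  simp only [Vlyap] at hVν
  have hν1 : ν.1 ^ 2 ≤ (3/2) * δ ^ 2 := by nlinarith [sq_nonneg (ν.2 ^ 2)]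
  have hν2 : ν.2 ^ 2 ≤ 2 * δ := by
    nlinarith [sq_nonneg ν.1, sq_nonneg (ν.2 ^ 2 - 2 * δ), sq_nonneg (ν.2 ^ 2 + 2 * δ),
      sq_nonneg ν.2, hδ0.le]
  have hsum : ν.1 ^ 2 + ν.2 ^ 2 < ε ^ 2 := by nlinarith [hδ0.le, hε.le]
  have : enorm2 ν < ε := by
    rw [enorm2, Real.sqrt_lt' hε]; exact hsum
  exact this
end
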